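/- arXiv:1307.1105 — 2 statements merged into one kernel-verified Lean document; each statement's English description precedes it below -/
import Mathlib

section
/- Let Ã, B, u be smooth fields on ℝ × ℝ³ with ∂Ã/∂t − u×(∇×Ã) + ∇(u·Ã) = 0 (the one-form Ã·dx is Lie dragged), ∂B/∂t − ∇×(u×B) = 0 (Faraday's equation) and ∇·B = 0. Then the magnetic helicity density h̃ = Ã·B satisfies the continuity equation ∂h̃/∂t + ∇·(h̃ u) = 0; moreover, if in addition ρ is smooth with ρ > 0 and ∂ρ/∂t + ∇·(ρu) = 0, then (∂/∂t + u·∇)( (Ã·B)/ρ ) = 0. -/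
noncomputable section

/-- Vectors in ℝ³. -/
abbrev Vec3 : Type := Fin 3 → ℝ

/-- Points of space-time: `(t, x)` with `t : ℝ`, `x : Fin 3 → ℝ`. -/
abbrev Pt : Type := ℝ × Vec3

/-- Euclidean dot product on ℝ³. -/
def dot3 (a b : Vec3) : ℝ := ∑ i, a i * b i

/-- Cross product on ℝ³. -/
def cross3 (a b : Vec3) : Vec3 :=
  ![a 1 * b 2 - a 2 * b 1, a 2 * b 0 - a 0 * b 2, a 0 * b 1 - a 1 * b 0]

/-- Spatial partial derivative ∂f/∂xᵢ of a scalar field. -/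
def pd (i : Fin 3) (f : Pt → ℝ) (p : Pt) : ℝ :=
  fderiv ℝ (fun x => f (p.1, x)) p.2 (Pi.single i 1)

/-- Time derivative ∂f/∂t of a scalar field. -/
def dt (f : Pt → ℝ) (p : Pt) : ℝ := deriv (fun s => f (s, p.2)) p.1

/-- Time derivative of a vector field, componentwise. -/
def dtVec (F : Pt → Vec3) (p : Pt) : Vec3 := fun i => dt (fun q => F q i) p

/-- Spatial gradient ∇f of a scalar field. -/
def grad3 (f : Pt → ℝ) (p : Pt) : Vec3 := fun i => pd i f p

/-- Spatial divergence ∇·F of a vector field. -/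
def div3 (F : Pt → Vec3) (p : Pt) : ℝ := ∑ i, pd i (fun q => F q i) p

/-- Spatial curl ∇×F of a vector field. -/
def curl3 (F : Pt → Vec3) (p : Pt) : Vec3 :=
  ![pd 1 (fun q => F q 2) p - pd 2 (fun q => F q 1) p,
    pd 2 (fun q => F q 0) p - pd 0 (fun q => F q 2) p,
    pd 0 (fun q => F q 1) p - pd 1 (fun q => F q 0) p]

/-- Directional derivative (u·∇)f of a scalar field. -/
def dirD (u : Pt → Vec3) (f : Pt → ℝ) (p : Pt) : ℝ := ∑ i, u p i * pd i f p

/-- Directional derivative (u·∇)F of a vector field. -/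
def dirDVec (u F : Pt → Vec3) (p : Pt) : Vec3 :=
  fun j => ∑ i, u p i * pd i (fun q => F q j) p

/-- (∇u)ᵀ·A, the vector with i-th component ∑ⱼ (∂uʲ/∂xⁱ) Aⱼ. -/
def gradTdot (u A : Pt → Vec3) (p : Pt) : Vec3 :=
  fun i => ∑ j, pd i (fun q => u q j) p * A p j

/-- A field is smooth when it is C^∞ jointly in time and space. -/
def SmoothS (f : Pt → ℝ) : Prop := ContDiff ℝ (⊤ : ℕ∞) f

/-- A vector field is smooth when it is C^∞ jointly in time and space. -/
def SmoothV (F : Pt → Vec3) : Prop := ContDiff ℝ (⊤ : ℕ∞) F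

lemma smooth_comp {F : Pt → Vec3} (hF : SmoothV F) (i : Fin 3) :
    SmoothS (fun q => F q i) := contDiff_pi.mp hF i

lemma diffAt_x {f : Pt → ℝ} (hf : SmoothS f) (p : Pt) :
    DifferentiableAt ℝ (fun x => f (p.1, x)) p.2 := by
  have h : DifferentiableAt ℝ f (p.1, p.2) := (hf.differentiable (by simp)).differentiableAt
  exact h.comp p.2 ((differentiableAt_const _).prodMk differentiableAt_id)

lemma diffAt_t {f : Pt → ℝ} (hf : SmoothS f) (p : Pt) :
    DifferentiableAt ℝ (fun s => f (s, p.2)) p.1 := by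
  have h : DifferentiableAt ℝ f (p.1, p.2) := (hf.differentiable (by simp)).differentiableAt
  exact h.comp p.1 (differentiableAt_id.prodMk (differentiableAt_const _))

lemma pd_mul (f g : Pt → ℝ) (hf : SmoothS f) (hg : SmoothS g) (i : Fin 3) (p : Pt) :
    pd i (fun q => f q * g q) p = pd i f p * g p + f p * pd i g p := by
  show (fderiv ℝ (fun x => f (p.1, x) * g (p.1, x)) p.2) (Pi.single i 1) = _
  rw [fderiv_fun_mul (diffAt_x hf p) (diffAt_x hg p)]
  simp [pd]
  ring

lemma pd_add (f g : Pt → ℝ) (hf : SmoothS f) (hg : SmoothS g) (i : Fin 3) (p : Pt) :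
    pd i (fun q => f q + g q) p = pd i f p + pd i g p := by
  show (fderiv ℝ (fun x => f (p.1, x) + g (p.1, x)) p.2) (Pi.single i 1) = _
  rw [fderiv_fun_add (diffAt_x hf p) (diffAt_x hg p)]
  simp [pd]

lemma dt_mul (f g : Pt → ℝ) (hf : SmoothS f) (hg : SmoothS g) (p : Pt) :
    dt (fun q => f q * g q) p = dt f p * g p + f p * dt g p := by
  show deriv (fun s => f (s, p.2) * g (s, p.2)) p.1 = _
  rw [deriv_fun_mul (diffAt_t hf p) (diffAt_t hg p)]
  simp [dt]

lemma dt_add (f g : Pt → ℝ) (hf : SmoothS f) (hg : SmoothS g) (p : Pt) :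
    dt (fun q => f q + g q) p = dt f p + dt g p := by
  show deriv (fun s => f (s, p.2) + g (s, p.2)) p.1 = _
  rw [deriv_fun_add (diffAt_t hf p) (diffAt_t hg p)]
  simp [dt]



lemma pd_sub (f g : Pt → ℝ) (hf : SmoothS f) (hg : SmoothS g) (i : Fin 3) (p : Pt) :
    pd i (fun q => f q - g q) p = pd i f p - pd i g p := by
  show (fderiv ℝ (fun x => f (p.1, x) - g (p.1, x)) p.2) (Pi.single i 1) = _
  rw [fderiv_fun_sub (diffAt_x hf p) (diffAt_x hg p)]
  simp [pd]

lemma sMulS {f g : Pt → ℝ} (hf : SmoothS f) (hg : SmoothS g) :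
    SmoothS (fun q => f q * g q) := ContDiff.mul hf hg

lemma sAddS {f g : Pt → ℝ} (hf : SmoothS f) (hg : SmoothS g) :
    SmoothS (fun q => f q + g q) := ContDiff.add hf hg

lemma dot3_expand (A B : Pt → Vec3) :
    (fun q => dot3 (A q) (B q)) =
      fun q => A q 0 * B q 0 + (A q 1 * B q 1 + A q 2 * B q 2) := by
  funext q; simp [dot3, Fin.sum_univ_three]; ring

lemma smooth_dot {A B : Pt → Vec3} (hA : SmoothV A) (hB : SmoothV B) :
    SmoothS (fun q => dot3 (A q) (B q)) := by
  rw [dot3_expand]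
  exact sAddS (sMulS (smooth_comp hA 0) (smooth_comp hB 0))
    (sAddS (sMulS (smooth_comp hA 1) (smooth_comp hB 1))
      (sMulS (smooth_comp hA 2) (smooth_comp hB 2)))

lemma pd_dot (A B : Pt → Vec3) (hA : SmoothV A) (hB : SmoothV B) (i : Fin 3) (p : Pt) :
    pd i (fun q => dot3 (A q) (B q)) p =
      (pd i (fun q => A q 0) p * B p 0 + A p 0 * pd i (fun q => B q 0) p) +
      ((pd i (fun q => A q 1) p * B p 1 + A p 1 * pd i (fun q => B q 1) p) +
       (pd i (fun q => A q 2) p * B p 2 + A p 2 * pd i (fun q => B q 2) p)) := by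
  rw [dot3_expand,
    pd_add _ _ (sMulS (smooth_comp hA 0) (smooth_comp hB 0))
      (sAddS (sMulS (smooth_comp hA 1) (smooth_comp hB 1))
        (sMulS (smooth_comp hA 2) (smooth_comp hB 2))),
    pd_add _ _ (sMulS (smooth_comp hA 1) (smooth_comp hB 1))
      (sMulS (smooth_comp hA 2) (smooth_comp hB 2)),
    pd_mul _ _ (smooth_comp hA 0) (smooth_comp hB 0),
    pd_mul _ _ (smooth_comp hA 1) (smooth_comp hB 1),
    pd_mul _ _ (smooth_comp hA 2) (smooth_comp hB 2)]

lemma dt_dot (A B : Pt → Vec3) (hA : SmoothV A) (hB : SmoothV B) (p : Pt) :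
    dt (fun q => dot3 (A q) (B q)) p =
      (dt (fun q => A q 0) p * B p 0 + A p 0 * dt (fun q => B q 0) p) +
      ((dt (fun q => A q 1) p * B p 1 + A p 1 * dt (fun q => B q 1) p) +
       (dt (fun q => A q 2) p * B p 2 + A p 2 * dt (fun q => B q 2) p)) := by
  rw [dot3_expand,
    dt_add _ _ (sMulS (smooth_comp hA 0) (smooth_comp hB 0))
      (sAddS (sMulS (smooth_comp hA 1) (smooth_comp hB 1))
        (sMulS (smooth_comp hA 2) (smooth_comp hB 2))),
    dt_add _ _ (sMulS (smooth_comp hA 1) (smooth_comp hB 1))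
      (sMulS (smooth_comp hA 2) (smooth_comp hB 2)),
    dt_mul _ _ (smooth_comp hA 0) (smooth_comp hB 0),
    dt_mul _ _ (smooth_comp hA 1) (smooth_comp hB 1),
    dt_mul _ _ (smooth_comp hA 2) (smooth_comp hB 2)]

lemma pd_cross_comp (F G : Pt → Vec3) (hF : SmoothV F) (hG : SmoothV G)
    (i j k l m : Fin 3) (p : Pt) :
    pd i (fun q => F q j * G q k - F q l * G q m) p =
      pd i (fun q => F q j) p * G p k + F p j * pd i (fun q => G q k) p
      - (pd i (fun q => F q l) p * G p m + F p l * pd i (fun q => G q m) p) := by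
  rw [pd_sub _ _ (sMulS (smooth_comp hF j) (smooth_comp hG k))
      (sMulS (smooth_comp hF l) (smooth_comp hG m)),
    pd_mul _ _ (smooth_comp hF j) (smooth_comp hG k),
    pd_mul _ _ (smooth_comp hF l) (smooth_comp hG m)]

/-- if Ã·dx is Lie dragged and B obeys Faraday's equation with
    ∇·B = 0, then h̃ = Ã·B obeys a continuity equation; with mass continuity
    in addition, (Ã·B)/ρ is advected. -/
theorem magnetic_helicity_continuity_and_advection
    (Atil B u : Pt → Vec3)
    (hAtil : SmoothV Atil) (hB : SmoothV B) (hu : SmoothV u)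
    (hlie : ∀ p : Pt,
      dtVec Atil p - cross3 (u p) (curl3 Atil p)
        + grad3 (fun q => dot3 (u q) (Atil q)) p = 0)
    (hfar : ∀ p : Pt,
      dtVec B p - curl3 (fun q => cross3 (u q) (B q)) p = 0)
    (hgauss : ∀ p : Pt, div3 B p = 0) :
    (∀ p : Pt,
      dt (fun q => dot3 (Atil q) (B q)) p
        + div3 (fun q => dot3 (Atil q) (B q) • u q) p = 0)
    ∧ (∀ ρ : Pt → ℝ, SmoothS ρ → (∀ p : Pt, 0 < ρ p) →
        (∀ p : Pt, dt ρ p + div3 (fun q => ρ q • u q) p = 0) →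
        ∀ p : Pt,
          dt (fun q => dot3 (Atil q) (B q) / ρ q) p
            + dirD u (fun q => dot3 (Atil q) (B q) / ρ q) p = 0) := by
  have hdot : SmoothS (fun q => dot3 (Atil q) (B q)) := smooth_dot hAtil hB
  have hdiv : ∀ (g : Pt → ℝ), SmoothS g → ∀ p : Pt,
      div3 (fun q => g q • u q) p =
        (pd 0 g p * u p 0 + g p * pd 0 (fun q => u q 0) p) +
        ((pd 1 g p * u p 1 + g p * pd 1 (fun q => u q 1) p) +
         (pd 2 g p * u p 2 + g p * pd 2 (fun q => u q 2) p)) := by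
    intro g hg p
    simp only [div3, Fin.sum_univ_three, Pi.smul_apply, smul_eq_mul]
    rw [pd_mul g _ hg (smooth_comp hu 0), pd_mul g _ hg (smooth_comp hu 1),
      pd_mul g _ hg (smooth_comp hu 2)]
    ring
  have part1 : ∀ p : Pt,
      dt (fun q => dot3 (Atil q) (B q)) p
        + div3 (fun q => dot3 (Atil q) (B q) • u q) p = 0 := by
    intro p
    have hL0 := congrFun (hlie p) 0
    have hL1 := congrFun (hlie p) 1
    have hL2 := congrFun (hlie p) 2
    have hF0 := congrFun (hfar p) 0
    have hF1 := congrFun (hfar p) 1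
    have hF2 := congrFun (hfar p) 2
    have hG := hgauss p
    simp only [dtVec, grad3, cross3, curl3, Pi.add_apply, Pi.sub_apply, Pi.zero_apply,
      Matrix.cons_val_zero, Matrix.cons_val_one, Matrix.head_cons, Matrix.cons_val_two,
      Matrix.tail_cons] at hL0 hL1 hL2 hF0 hF1 hF2
    simp only [pd_dot u Atil hu hAtil] at hL0 hL1 hL2
    simp only [pd_cross_comp u B hu hB] at hF0 hF1 hF2
    simp only [div3, Fin.sum_univ_three] at hG
    rw [dt_dot Atil B hAtil hB, hdiv _ hdot p]
    simp only [pd_dot Atil B hAtil hB]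
    simp only [dot3, Fin.sum_univ_three]
    linear_combination B p 0 * hL0 + B p 1 * hL1 + B p 2 * hL2
      + Atil p 0 * hF0 + Atil p 1 * hF1 + Atil p 2 * hF2
      + (u p 0 * Atil p 0 + u p 1 * Atil p 1 + u p 2 * Atil p 2) * hG
  refine ⟨part1, ?_⟩
  intro ρ hρ hpos hmass p
  have hρp : ρ p ≠ 0 := ne_of_gt (hpos p)
  have hgq : SmoothS (fun q => dot3 (Atil q) (B q) / ρ q) :=
    ContDiff.div hdot hρ (fun x => ne_of_gt (hpos x))
  have key : (fun q : Pt => dot3 (Atil q) (B q)) =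
      fun q => (dot3 (Atil q) (B q) / ρ q) * ρ q := by
    funext q
    rw [div_mul_cancel₀ _ (ne_of_gt (hpos q))]
  have hpd' : ∀ i : Fin 3,
      ρ p * pd i (fun q => dot3 (Atil q) (B q)) p =
        ρ p * (pd i (fun q => dot3 (Atil q) (B q) / ρ q) p * ρ p)
          + dot3 (Atil p) (B p) * pd i ρ p := by
    intro i
    conv_lhs => rw [key]
    rw [pd_mul _ _ hgq hρ i p]
    field_simp
  have hdt' :
      ρ p * dt (fun q => dot3 (Atil q) (B q)) p =
        ρ p * (dt (fun q => dot3 (Atil q) (B q) / ρ q) p * ρ p)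
          + dot3 (Atil p) (B p) * dt ρ p := by
    conv_lhs => rw [key]
    rw [dt_mul _ _ hgq hρ p]
    field_simp
  have h1 := part1 p
  have h2 := hmass p
  rw [hdiv _ hdot p] at h1
  rw [hdiv _ hρ p] at h2
  have hkey : ρ p ^ 2 *
      (dt (fun q => dot3 (Atil q) (B q) / ρ q) p
        + dirD u (fun q => dot3 (Atil q) (B q) / ρ q) p) = 0 := by
    simp only [dirD, Fin.sum_univ_three]
    linear_combination ρ p * h1 - dot3 (Atil p) (B p) * h2 - hdt'
      - u p 0 * hpd' 0 - u p 1 * hpd' 1 - u p 2 * hpd' 2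
  have := mul_eq_zero.mp hkey
  rcases this with h | h
  · exact absurd h (pow_ne_zero 2 hρp)
  · exact h

end
end

section
/- (Hollmann invariant) Let u, w be smooth ℝ³-valued fields and ρ, S, I smooth scalar fields on ℝ × ℝ³ with ρ > 0 everywhere. Assume the one-form w·dx is Lie dragged by the flow, ∂w/∂t − u×(∇×w) + ∇(u·w) = 0; S and I are advected scalars, ∂S/∂t + u·∇S = 0 and ∂I/∂t + u·∇I = 0; and mass continuity holds, ∂ρ/∂t + ∇·(ρu) = 0. Then the scalar I_h = w·(∇S × ∇I)/ρ is advected with the flow: (∂/∂t + u·∇) I_h = 0. -/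
noncomputable section

/-- directional fderiv -/
def D (v : Pt) (f : Pt → ℝ) (p : Pt) : ℝ := fderiv ℝ f p v

abbrev et : Pt := (1, 0)
abbrev ex (i : Fin 3) : Pt := (0, Pi.single i 1)

theorem pd_eq {f : Pt → ℝ} (hf : ContDiff ℝ (⊤ : ℕ∞) f) (i : Fin 3) (p : Pt) :
    pd i f p = D (ex i) f p := by
  have h1 : HasFDerivAt (fun x : Vec3 => (p.1, x))
      (ContinuousLinearMap.inr ℝ ℝ Vec3) p.2 := (hasFDerivAt_prodMk_right p.1 p.2)
  have h2 := (hf.differentiable (by simp) (p.1, p.2)).hasFDerivAt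
  have h3 := (h2.comp p.2 h1).fderiv
  simp only [pd, D]
  rw [show (fun x : Vec3 => f (p.1, x)) = f ∘ (fun x : Vec3 => (p.1, x)) from rfl, h3]
  rfl

theorem dt_eq {f : Pt → ℝ} (hf : ContDiff ℝ (⊤ : ℕ∞) f) (p : Pt) :
    dt f p = D et f p := by
  have h1 : HasDerivAt (fun s : ℝ => (s, p.2)) ((1 : ℝ), (0 : Vec3)) p.1 := by
    have := (hasDerivAt_id p.1).prodMk (hasDerivAt_const p.1 p.2)
    simpa using this
  have h2 := (hf.differentiable (by simp) (p.1, p.2)).hasFDerivAt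
  have h3 := (h2.comp_hasDerivAt p.1 h1)
  simp only [dt, D]
  rw [show (fun s : ℝ => f (s, p.2)) = f ∘ (fun s : ℝ => (s, p.2)) from rfl, h3.deriv]

@[fun_prop]
theorem smooth_D {f : Pt → ℝ} (hf : ContDiff ℝ (⊤ : ℕ∞) f) (v : Pt) :
    ContDiff ℝ (⊤ : ℕ∞) (D v f) := by
  have h : ContDiff ℝ (⊤ : ℕ∞) (fderiv ℝ f) := hf.fderiv_right (by exact_mod_cast le_top)
  exact h.clm_apply contDiff_const

theorem D_comm {f : Pt → ℝ} (hf : ContDiff ℝ (⊤ : ℕ∞) f) (v v' : Pt) (p : Pt) :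
    D v (D v' f) p = D v' (D v f) p := by
  have hd : ContDiff ℝ (⊤ : ℕ∞) (fderiv ℝ f) := hf.fderiv_right (by exact_mod_cast le_top)
  have key : ∀ a b : Pt, D a (D b f) p = fderiv ℝ (fderiv ℝ f) p a b := by
    intro a b
    have h2 : DifferentiableAt ℝ (fderiv ℝ f) p :=
      (hd.differentiable (by simp)) p
    have := fderiv_clm_apply (𝕜 := ℝ) h2 (differentiableAt_const b)
    have e0 : D a (D b f) p = fderiv ℝ (fun q => (fderiv ℝ f q) b) p a := rfl
    rw [e0, this]
    simp
  rw [key, key]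
  exact hf.contDiffAt.isSymmSndFDerivAt (by rw [minSmoothness_of_isRCLikeNormedField]; exact WithTop.coe_le_coe.mpr le_top) v v'

section Dcalc
variable {f g : Pt → ℝ} {v p : Pt}

theorem D_const (v p : Pt) (c : ℝ) : D v (fun _ => c) p = 0 := by
  simp [D]

theorem D_add (hf : ContDiff ℝ (⊤ : ℕ∞) f) (hg : ContDiff ℝ (⊤ : ℕ∞) g) :
    D v (fun q => f q + g q) p = D v f p + D v g p := by
  simp only [D]
  rw [fderiv_fun_add ((hf.differentiable (by simp)) p)
    ((hg.differentiable (by simp)) p)]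
  rfl

theorem D_sub (hf : ContDiff ℝ (⊤ : ℕ∞) f) (hg : ContDiff ℝ (⊤ : ℕ∞) g) :
    D v (fun q => f q - g q) p = D v f p - D v g p := by
  simp only [D]
  rw [fderiv_fun_sub ((hf.differentiable (by simp)) p)
    ((hg.differentiable (by simp)) p)]
  rfl

theorem D_neg (f : Pt → ℝ) (v p : Pt) : D v (fun q => -f q) p = -D v f p := by
  simp only [D, fderiv_fun_neg]; rfl

theorem D_mul (hf : ContDiff ℝ (⊤ : ℕ∞) f) (hg : ContDiff ℝ (⊤ : ℕ∞) g) :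
    D v (fun q => f q * g q) p = f p * D v g p + g p * D v f p := by
  simp only [D]
  rw [fderiv_fun_mul ((hf.differentiable (by simp)) p)
    ((hg.differentiable (by simp)) p)]
  simp [mul_comm]

theorem D_congr {f g : Pt → ℝ} (h : ∀ q, f q = g q) (v p : Pt) : D v f p = D v g p := by
  simp only [D]; rw [funext h]

end Dcalc

set_option maxHeartbeats 4000000 in
/-- Hollmann invariant: I_h = w·(∇S × ∇I)/ρ is advected with
    the flow. -/
theorem hollmann_invariant
    (u w : Pt → Vec3) (ρ S I : Pt → ℝ)
    (hu : SmoothV u) (hw : SmoothV w) (hρ : SmoothS ρ)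
    (hS : SmoothS S) (hI : SmoothS I)
    (hρpos : ∀ p : Pt, 0 < ρ p)
    (hlie : ∀ p : Pt,
      dtVec w p - cross3 (u p) (curl3 w p)
        + grad3 (fun q => dot3 (u q) (w q)) p = 0)
    (hSadv : ∀ p : Pt, dt S p + dirD u S p = 0)
    (hIadv : ∀ p : Pt, dt I p + dirD u I p = 0)
    (hcont : ∀ p : Pt, dt ρ p + div3 (fun q => ρ q • u q) p = 0) :
    ∀ p : Pt,
      dt (fun q => dot3 (w q) (cross3 (grad3 S q) (grad3 I q)) / ρ q) p
        + dirD u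
            (fun q => dot3 (w q) (cross3 (grad3 S q) (grad3 I q)) / ρ q) p
        = 0 := by
  intro p
  have hu' : ContDiff ℝ (⊤:ℕ∞) u := hu
  have hw' : ContDiff ℝ (⊤:ℕ∞) w := hw
  have hρ' : ContDiff ℝ (⊤:ℕ∞) ρ := hρ
  have hS' : ContDiff ℝ (⊤:ℕ∞) S := hS
  have hI' : ContDiff ℝ (⊤:ℕ∞) I := hI
  have hρne : ∀ q : Pt, ρ q ≠ 0 := fun q => (hρpos q).ne'
  have hNs : ContDiff ℝ (⊤:ℕ∞) (fun q => w q 0 * (D (ex 1) S q * D (ex 2) I q - D (ex 2) S q * D (ex 1) I q) + w q 1 * (D (ex 2) S q * D (ex 0) I q - D (ex 0) S q * D (ex 2) I q) + w q 2 * (D (ex 0) S q * D (ex 1) I q - D (ex 1) S q * D (ex 0) I q)) := by fun_prop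
  have hGsm : ContDiff ℝ (⊤:ℕ∞) (fun q => (w q 0 * (D (ex 1) S q * D (ex 2) I q - D (ex 2) S q * D (ex 1) I q) + w q 1 * (D (ex 2) S q * D (ex 0) I q - D (ex 0) S q * D (ex 2) I q) + w q 2 * (D (ex 0) S q * D (ex 1) I q - D (ex 1) S q * D (ex 0) I q)) / ρ q) := hNs.div hρ' hρne
  have hFeq : (fun q => dot3 (w q) (cross3 (grad3 S q) (grad3 I q)) / ρ q)
      = (fun q => (w q 0 * (D (ex 1) S q * D (ex 2) I q - D (ex 2) S q * D (ex 1) I q) + w q 1 * (D (ex 2) S q * D (ex 0) I q - D (ex 0) S q * D (ex 2) I q) + w q 2 * (D (ex 0) S q * D (ex 1) I q - D (ex 1) S q * D (ex 0) I q)) / ρ q) := by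
    funext q
    simp only [dot3, cross3, grad3, Fin.sum_univ_three, Matrix.cons_val_zero, Matrix.cons_val_one,
      Matrix.head_cons, Matrix.cons_val_two, Matrix.tail_cons]
    simp (disch := fun_prop) only [pd_eq]
    all_goals ring
  have hdiv : ∀ v : Pt, D v (fun q => (w q 0 * (D (ex 1) S q * D (ex 2) I q - D (ex 2) S q * D (ex 1) I q) + w q 1 * (D (ex 2) S q * D (ex 0) I q - D (ex 0) S q * D (ex 2) I q) + w q 2 * (D (ex 0) S q * D (ex 1) I q - D (ex 1) S q * D (ex 0) I q)) / ρ q) p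
      = (D v (fun q => w q 0 * (D (ex 1) S q * D (ex 2) I q - D (ex 2) S q * D (ex 1) I q) + w q 1 * (D (ex 2) S q * D (ex 0) I q - D (ex 0) S q * D (ex 2) I q) + w q 2 * (D (ex 0) S q * D (ex 1) I q - D (ex 1) S q * D (ex 0) I q)) p * ρ p - (w p 0 * (D (ex 1) S p * D (ex 2) I p - D (ex 2) S p * D (ex 1) I p) + w p 1 * (D (ex 2) S p * D (ex 0) I p - D (ex 0) S p * D (ex 2) I p) + w p 2 * (D (ex 0) S p * D (ex 1) I p - D (ex 1) S p * D (ex 0) I p)) * D v ρ p) / ρ p ^ 2 := by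
    intro v
    have hm : (fun q => ((w q 0 * (D (ex 1) S q * D (ex 2) I q - D (ex 2) S q * D (ex 1) I q) + w q 1 * (D (ex 2) S q * D (ex 0) I q - D (ex 0) S q * D (ex 2) I q) + w q 2 * (D (ex 0) S q * D (ex 1) I q - D (ex 1) S q * D (ex 0) I q)) / ρ q) * ρ q) = (fun q => w q 0 * (D (ex 1) S q * D (ex 2) I q - D (ex 2) S q * D (ex 1) I q) + w q 1 * (D (ex 2) S q * D (ex 0) I q - D (ex 0) S q * D (ex 2) I q) + w q 2 * (D (ex 0) S q * D (ex 1) I q - D (ex 1) S q * D (ex 0) I q)) :=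
      funext fun q => div_mul_cancel₀ _ (hρne q)
    have h1 : D v (fun q => w q 0 * (D (ex 1) S q * D (ex 2) I q - D (ex 2) S q * D (ex 1) I q) + w q 1 * (D (ex 2) S q * D (ex 0) I q - D (ex 0) S q * D (ex 2) I q) + w q 2 * (D (ex 0) S q * D (ex 1) I q - D (ex 1) S q * D (ex 0) I q)) p
        = ((w p 0 * (D (ex 1) S p * D (ex 2) I p - D (ex 2) S p * D (ex 1) I p) + w p 1 * (D (ex 2) S p * D (ex 0) I p - D (ex 0) S p * D (ex 2) I p) + w p 2 * (D (ex 0) S p * D (ex 1) I p - D (ex 1) S p * D (ex 0) I p)) / ρ p) * D v ρ p + ρ p * D v (fun q => (w q 0 * (D (ex 1) S q * D (ex 2) I q - D (ex 2) S q * D (ex 1) I q) + w q 1 * (D (ex 2) S q * D (ex 0) I q - D (ex 0) S q * D (ex 2) I q) + w q 2 * (D (ex 0) S q * D (ex 1) I q - D (ex 1) S q * D (ex 0) I q)) / ρ q) p := by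
      conv_lhs => rw [← hm]
      exact D_mul hGsm hρ'
    rw [eq_div_iff (pow_ne_zero 2 (hρne p))]
    have hcanc : ρ p * ((w p 0 * (D (ex 1) S p * D (ex 2) I p - D (ex 2) S p * D (ex 1) I p) + w p 1 * (D (ex 2) S p * D (ex 0) I p - D (ex 0) S p * D (ex 2) I p) + w p 2 * (D (ex 0) S p * D (ex 1) I p - D (ex 1) S p * D (ex 0) I p)) / ρ p) = (w p 0 * (D (ex 1) S p * D (ex 2) I p - D (ex 2) S p * D (ex 1) I p) + w p 1 * (D (ex 2) S p * D (ex 0) I p - D (ex 0) S p * D (ex 2) I p) + w p 2 * (D (ex 0) S p * D (ex 1) I p - D (ex 1) S p * D (ex 0) I p)) := by rw [mul_comm, div_mul_cancel₀ _ (hρne p)]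
    linear_combination (-(ρ p)) * h1 - D v ρ p * hcanc
  have E10 : D et (fun q => w q 0) p = -(u p 0 * D (ex 0) (fun q => w q 0) p + u p 1 * D (ex 1) (fun q => w q 0) p + u p 2 * D (ex 2) (fun q => w q 0) p) - (w p 0 * D (ex 0) (fun q => u q 0) p + w p 1 * D (ex 0) (fun q => u q 1) p + w p 2 * D (ex 0) (fun q => u q 2) p) := by
    have h := congrFun (hlie p) 0
    simp only [Pi.add_apply, Pi.sub_apply, Pi.zero_apply, dtVec, cross3, curl3, grad3, dot3,
      Fin.sum_univ_three, Matrix.cons_val_zero, Matrix.cons_val_one, Matrix.head_cons,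
      Matrix.cons_val_two, Matrix.tail_cons] at h
    simp (disch := fun_prop) only [dt_eq, pd_eq, D_add, D_sub, D_mul] at h
    linear_combination h
  have E11 : D et (fun q => w q 1) p = -(u p 0 * D (ex 0) (fun q => w q 1) p + u p 1 * D (ex 1) (fun q => w q 1) p + u p 2 * D (ex 2) (fun q => w q 1) p) - (w p 0 * D (ex 1) (fun q => u q 0) p + w p 1 * D (ex 1) (fun q => u q 1) p + w p 2 * D (ex 1) (fun q => u q 2) p) := by
    have h := congrFun (hlie p) 1
    simp only [Pi.add_apply, Pi.sub_apply, Pi.zero_apply, dtVec, cross3, curl3, grad3, dot3,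
      Fin.sum_univ_three, Matrix.cons_val_zero, Matrix.cons_val_one, Matrix.head_cons,
      Matrix.cons_val_two, Matrix.tail_cons] at h
    simp (disch := fun_prop) only [dt_eq, pd_eq, D_add, D_sub, D_mul] at h
    linear_combination h
  have E12 : D et (fun q => w q 2) p = -(u p 0 * D (ex 0) (fun q => w q 2) p + u p 1 * D (ex 1) (fun q => w q 2) p + u p 2 * D (ex 2) (fun q => w q 2) p) - (w p 0 * D (ex 2) (fun q => u q 0) p + w p 1 * D (ex 2) (fun q => u q 1) p + w p 2 * D (ex 2) (fun q => u q 2) p) := by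
    have h := congrFun (hlie p) 2
    simp only [Pi.add_apply, Pi.sub_apply, Pi.zero_apply, dtVec, cross3, curl3, grad3, dot3,
      Fin.sum_univ_three, Matrix.cons_val_zero, Matrix.cons_val_one, Matrix.head_cons,
      Matrix.cons_val_two, Matrix.tail_cons] at h
    simp (disch := fun_prop) only [dt_eq, pd_eq, D_add, D_sub, D_mul] at h
    linear_combination h
  have E2 : D et ρ p = -(ρ p * D (ex 0) (fun q => u q 0) p + u p 0 * D (ex 0) ρ p + ρ p * D (ex 1) (fun q => u q 1) p + u p 1 * D (ex 1) ρ p + ρ p * D (ex 2) (fun q => u q 2) p + u p 2 * D (ex 2) ρ p) := by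
    have h := hcont p
    simp only [div3, Fin.sum_univ_three, Pi.smul_apply, smul_eq_mul] at h
    simp (disch := fun_prop) only [dt_eq, pd_eq, D_add, D_mul] at h
    linear_combination h
  have hSfun : (fun q => D et S q + (u q 0 * D (ex 0) S q + u q 1 * D (ex 1) S q
      + u q 2 * D (ex 2) S q)) = (fun _ : Pt => (0:ℝ)) := by
    funext q
    have h := hSadv q
    simp only [dirD, Fin.sum_univ_three] at h
    simp (disch := fun_prop) only [dt_eq, pd_eq] at h
    linarith
  have hIfun : (fun q => D et I q + (u q 0 * D (ex 0) I q + u q 1 * D (ex 1) I q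
      + u q 2 * D (ex 2) I q)) = (fun _ : Pt => (0:ℝ)) := by
    funext q
    have h := hIadv q
    simp only [dirD, Fin.sum_univ_three] at h
    simp (disch := fun_prop) only [dt_eq, pd_eq] at h
    linarith
  have E30 : D et (D (ex 0) S) p = -(D (ex 0) (fun q => u q 0) p * D (ex 0) S p + u p 0 * D (ex 0) (D (ex 0) S) p + D (ex 0) (fun q => u q 1) p * D (ex 1) S p + u p 1 * D (ex 0) (D (ex 1) S) p + D (ex 0) (fun q => u q 2) p * D (ex 2) S p + u p 2 * D (ex 0) (D (ex 2) S) p) := by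
    have h := congrArg (fun φ : Pt → ℝ => D (ex 0) φ p) hSfun
    simp (disch := fun_prop) only [D_add, D_mul, D_const] at h
    rw [D_comm hS' (ex 0) et p] at h
    linear_combination h
  have E31 : D et (D (ex 1) S) p = -(D (ex 1) (fun q => u q 0) p * D (ex 0) S p + u p 0 * D (ex 1) (D (ex 0) S) p + D (ex 1) (fun q => u q 1) p * D (ex 1) S p + u p 1 * D (ex 1) (D (ex 1) S) p + D (ex 1) (fun q => u q 2) p * D (ex 2) S p + u p 2 * D (ex 1) (D (ex 2) S) p) := by
    have h := congrArg (fun φ : Pt → ℝ => D (ex 1) φ p) hSfun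
    simp (disch := fun_prop) only [D_add, D_mul, D_const] at h
    rw [D_comm hS' (ex 1) et p] at h
    linear_combination h
  have E32 : D et (D (ex 2) S) p = -(D (ex 2) (fun q => u q 0) p * D (ex 0) S p + u p 0 * D (ex 2) (D (ex 0) S) p + D (ex 2) (fun q => u q 1) p * D (ex 1) S p + u p 1 * D (ex 2) (D (ex 1) S) p + D (ex 2) (fun q => u q 2) p * D (ex 2) S p + u p 2 * D (ex 2) (D (ex 2) S) p) := by
    have h := congrArg (fun φ : Pt → ℝ => D (ex 2) φ p) hSfun
    simp (disch := fun_prop) only [D_add, D_mul, D_const] at h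
    rw [D_comm hS' (ex 2) et p] at h
    linear_combination h
  have E40 : D et (D (ex 0) I) p = -(D (ex 0) (fun q => u q 0) p * D (ex 0) I p + u p 0 * D (ex 0) (D (ex 0) I) p + D (ex 0) (fun q => u q 1) p * D (ex 1) I p + u p 1 * D (ex 0) (D (ex 1) I) p + D (ex 0) (fun q => u q 2) p * D (ex 2) I p + u p 2 * D (ex 0) (D (ex 2) I) p) := by
    have h := congrArg (fun φ : Pt → ℝ => D (ex 0) φ p) hIfun
    simp (disch := fun_prop) only [D_add, D_mul, D_const] at h
    rw [D_comm hI' (ex 0) et p] at h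
    linear_combination h
  have E41 : D et (D (ex 1) I) p = -(D (ex 1) (fun q => u q 0) p * D (ex 0) I p + u p 0 * D (ex 1) (D (ex 0) I) p + D (ex 1) (fun q => u q 1) p * D (ex 1) I p + u p 1 * D (ex 1) (D (ex 1) I) p + D (ex 1) (fun q => u q 2) p * D (ex 2) I p + u p 2 * D (ex 1) (D (ex 2) I) p) := by
    have h := congrArg (fun φ : Pt → ℝ => D (ex 1) φ p) hIfun
    simp (disch := fun_prop) only [D_add, D_mul, D_const] at h
    rw [D_comm hI' (ex 1) et p] at h
    linear_combination h
  have E42 : D et (D (ex 2) I) p = -(D (ex 2) (fun q => u q 0) p * D (ex 0) I p + u p 0 * D (ex 2) (D (ex 0) I) p + D (ex 2) (fun q => u q 1) p * D (ex 1) I p + u p 1 * D (ex 2) (D (ex 1) I) p + D (ex 2) (fun q => u q 2) p * D (ex 2) I p + u p 2 * D (ex 2) (D (ex 2) I) p) := by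
    have h := congrArg (fun φ : Pt → ℝ => D (ex 2) φ p) hIfun
    simp (disch := fun_prop) only [D_add, D_mul, D_const] at h
    rw [D_comm hI' (ex 2) et p] at h
    linear_combination h
  have symS10 : D (ex 1) (D (ex 0) S) p = D (ex 0) (D (ex 1) S) p := D_comm hS' (ex 1) (ex 0) p
  have symS20 : D (ex 2) (D (ex 0) S) p = D (ex 0) (D (ex 2) S) p := D_comm hS' (ex 2) (ex 0) p
  have symS21 : D (ex 2) (D (ex 1) S) p = D (ex 1) (D (ex 2) S) p := D_comm hS' (ex 2) (ex 1) p
  have symI10 : D (ex 1) (D (ex 0) I) p = D (ex 0) (D (ex 1) I) p := D_comm hI' (ex 1) (ex 0) p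
  have symI20 : D (ex 2) (D (ex 0) I) p = D (ex 0) (D (ex 2) I) p := D_comm hI' (ex 2) (ex 0) p
  have symI21 : D (ex 2) (D (ex 1) I) p = D (ex 1) (D (ex 2) I) p := D_comm hI' (ex 2) (ex 1) p
  rw [hFeq, dt_eq hGsm]
  simp only [dirD, Fin.sum_univ_three]
  simp only [pd_eq hGsm]
  rw [hdiv et, hdiv (ex 0), hdiv (ex 1), hdiv (ex 2)]
  field_simp
  simp (disch := fun_prop) only [D_add, D_sub, D_mul] 
  rw [E10, E11, E12, E2, E30, E31, E32, E40, E41, E42]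
  rw [symS10, symS20, symS21, symI10, symI20, symI21]
  ring
end
end
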